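/- A reflexive digraph R ∈ 𝔗_a belongs to 𝕽 if and only if Σ_{i=1}^{ℓ(P)} ι(P_{i-1},P_i)_R ≤ h_R + ℓ(P) for every path P = P_0,…,P_{ℓ(P)} in R. In particular, every poset of height at most 1 belongs to 𝕽. -/

import Mathlib

/-- A finite digraph: a finite nonempty vertex set `V ⊆ ℕ` together with an
arc set `A ⊆ V × V`. -/
structure Dgraph where
  V : Finset ℕ
  nonempty : V.Nonempty
  A : Finset (ℕ × ℕ)
  A_sub : ∀ p ∈ A, p.1 ∈ V ∧ p.2 ∈ V

namespace Dgraph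

/-- The set of proper arcs of `G`, i.e. the arc set of `G*`. -/
def Astar (G : Dgraph) : Finset (ℕ × ℕ) := G.A.filter (fun p => p.1 ≠ p.2)

/-- `G` is reflexive. -/
def IsRefl (G : Dgraph) : Prop := ∀ v ∈ G.V, (v, v) ∈ G.A

/-- `p` is a path in `G` (a nonempty list of pairwise distinct vertices,
consecutive ones joined by arcs).  Its length as a path is `p.length - 1`. -/
def IsPath (G : Dgraph) (p : List ℕ) : Prop :=
  p ≠ [] ∧ p.Nodup ∧ (∀ v ∈ p, v ∈ G.V) ∧ p.Chain' (fun v w => (v, w) ∈ G.A)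

/-- `p` is a path in `G*`. -/
def IsPathStar (G : Dgraph) (p : List ℕ) : Prop :=
  p ≠ [] ∧ p.Nodup ∧ (∀ v ∈ p, v ∈ G.V) ∧ p.Chain' (fun v w => (v, w) ∈ G.A ∧ v ≠ w)

/-- `G*` contains a closed walk. -/
def HasClosedWalkStar (G : Dgraph) : Prop :=
  ∃ p : List ℕ, (∀ v ∈ p, v ∈ G.V) ∧ p.Chain' (fun v w => (v, w) ∈ G.A ∧ v ≠ w) ∧
    2 ≤ p.length ∧ p.head? = p.getLast?

/-- membership in the class `𝔗ₐ`: `G*` is acyclic. -/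
def MemTa (G : Dgraph) : Prop := ¬ G.HasClosedWalkStar

/-- The height of `G`: the maximal length of a path in `G`. -/
noncomputable def height (G : Dgraph) : ℕ :=
  sSup {n | ∃ p, G.IsPath p ∧ p.length = n + 1}

/-- The interval `[v,w]_G`. -/
def interval (G : Dgraph) (v w : ℕ) : Finset ℕ :=
  G.V.filter (fun z => (v, z) ∈ G.A ∧ (z, w) ∈ G.A)

/-- `ι(v,w)_G`, the cardinality of the interval `[v,w]_G`. -/
def iota (G : Dgraph) (v w : ℕ) : ℕ := (G.interval v w).card

/-- The set `𝓗(G,H)` of homomorphisms from `G` to `H` (represented as total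
maps `ℕ → ℕ`, normalized to `0` outside of `V(G)`). -/
def Hom (G H : Dgraph) : Set (ℕ → ℕ) :=
  {f | (∀ v ∈ G.V, f v ∈ H.V) ∧ (∀ p ∈ G.A, (f p.1, f p.2) ∈ H.A) ∧
    ∀ v, v ∉ G.V → f v = 0}

/-- The set `𝓢(G,H)` of strict homomorphisms from `G` to `H`. -/
def SHom (G H : Dgraph) : Set (ℕ → ℕ) :=
  {f ∈ Hom G H | ∀ p ∈ G.Astar, f p.1 ≠ f p.2}

/-- `μ_ξ(G)`, for a homomorphism `ξ` from `G` into `H`. -/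
def mu (G H : Dgraph) (f : ℕ → ℕ) : ℕ :=
  ∑ p ∈ G.Astar, H.iota (f p.1) (f p.2)

/-- `L` is a subgraph of `G`. -/
def Subgraph (L G : Dgraph) : Prop := L.V ⊆ G.V ∧ L.A ⊆ G.A

/-- Restriction of a map to a vertex set (normalized to `0` outside). -/
def restrict (X : Finset ℕ) (f : ℕ → ℕ) : ℕ → ℕ := fun x => if x ∈ X then f x else 0

/-- `𝓜(L,H)`: homomorphisms from `L` to `H` with maximal `μ`. -/
def MSet (L H : Dgraph) : Set (ℕ → ℕ) :=
  {f ∈ Hom L H | ∀ g ∈ Hom L H, mu L H g ≤ mu L H f}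

/-- `𝓜^𝓛(G,H)`. -/
def MLSet (G H : Dgraph) (𝓛 : Set Dgraph) : Set (ℕ → ℕ) :=
  {f ∈ Hom G H | ∀ L ∈ 𝓛, restrict L.V f ∈ MSet L H}

/-- `𝓙^𝓛_{G,H'}(ξ)` for `ξ ∈ 𝓗(G,H)`. -/
def JSet (G H H' : Dgraph) (𝓛 : Set Dgraph) (ξ : ℕ → ℕ) : Set (ℕ → ℕ) :=
  {ζ ∈ Hom G H' | ∀ L ∈ 𝓛, ∀ p ∈ L.Astar,
    H'.iota (ζ p.1) (ζ p.2) = H.iota (ξ p.1) (ξ p.2)}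

/-- The digraph `P_×` of a path `P = P_0, …, P_ℓ`: vertex set `{P_0,…,P_ℓ}`
and arcs `P_{i-1}P_i`. -/
def pathGraph (P : List ℕ) (h : P ≠ []) : Dgraph where
  V := P.toFinset
  nonempty := by
    obtain ⟨a, t, rfl⟩ := List.exists_cons_of_ne_nil h
    exact ⟨a, by simp⟩
  A := (P.zip P.tail).toFinset
  A_sub := by
    intro p hp
    rw [List.mem_toFinset] at hp
    have h1 := List.of_mem_zip hp
    exact ⟨List.mem_toFinset.mpr h1.1, List.mem_toFinset.mpr (List.mem_of_mem_tail h1.2)⟩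

/-- `𝓛(G)`: the set of the digraphs `P_×` for the paths `P` of length `h_G` in `G`. -/
def LSet (G : Dgraph) : Set Dgraph :=
  {D | ∃ (P : List ℕ) (h : P ≠ []), G.IsPath P ∧ P.length = G.height + 1 ∧
    D = pathGraph P h}

/-- The class `𝕽`: reflexive digraphs `R ∈ 𝔗ₐ` with
`𝓜^{𝓛(R)}(R,R) ∩ 𝓢(R,R) ≠ ∅`. -/
def MemR (R : Dgraph) : Prop :=
  R.MemTa ∧ R.IsRefl ∧ (MLSet R R (LSet R) ∩ SHom R R).Nonempty

/-- `G` is a poset: reflexive, antisymmetric and transitive. -/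
def IsPoset (G : Dgraph) : Prop :=
  G.IsRefl ∧ (∀ v w, (v, w) ∈ G.A → (w, v) ∈ G.A → v = w) ∧
    (∀ u v w, (u, v) ∈ G.A → (v, w) ∈ G.A → (u, w) ∈ G.A)

/-- The class `𝔗ₐ^{=n}`: digraphs in `𝔗ₐ` of height `n` in which every vertex
lies on a path of length `n`. -/
def MemTaEq (n : ℕ) (G : Dgraph) : Prop :=
  G.MemTa ∧ G.height = n ∧ ∀ v ∈ G.V, ∃ p, G.IsPath p ∧ p.length = n + 1 ∧ v ∈ p

/-- A maximal path in `G`: no path in `G` properly contains its vertex set. -/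
def MaximalPath (G : Dgraph) (P : List ℕ) : Prop :=
  G.IsPath P ∧ ∀ Q, G.IsPath Q → (∀ v ∈ P, v ∈ Q) → ∀ v ∈ Q, v ∈ P

end Dgraph

open Dgraph

namespace List

theorem chain'_nil {α : Type*} {R : α → α → Prop} : Chain' R [] := IsChain.nil

@[simp] theorem chain'_singleton {α : Type*} {R : α → α → Prop} (a : α) : Chain' R [a] :=
  IsChain.singleton a

@[simp] theorem chain'_nil' {α : Type*} {R : α → α → Prop} : Chain' R [] ↔ True :=
  iff_true_intro IsChain.nil

@[simp] theorem chain'_cons {α : Type*} {R : α → α → Prop} {x y : α} {l : List α} :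
    Chain' R (x :: y :: l) ↔ R x y ∧ Chain' R (y :: l) := isChain_cons_cons

theorem chain'_append {α : Type*} {R : α → α → Prop} {l₁ l₂ : List α} :
    Chain' R (l₁ ++ l₂) ↔ Chain' R l₁ ∧ Chain' R l₂ ∧
      ∀ x ∈ l₁.getLast?, ∀ y ∈ l₂.head?, R x y := isChain_append

theorem chain'_iff_get {α : Type*} {R : α → α → Prop} {l : List α} :
    Chain' R l ↔ ∀ (i : ℕ) (h : i < l.length - 1),
      R (l.get ⟨i, by omega⟩) (l.get ⟨i + 1, by omega⟩) := by
  show IsChain R l ↔ _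
  rw [isChain_iff_getElem]
  constructor
  · intro h i hi
    simpa using h i (by omega)
  · intro h i hi
    simpa using h i (by omega)

theorem Pairwise.chain' {α : Type*} {R : α → α → Prop} {l : List α} (h : Pairwise R l) :
    Chain' R l := h.isChain

end List

namespace Dgraph

lemma isPath_singleton (R : Dgraph) {v : ℕ} (hv : v ∈ R.V) : R.IsPath [v] :=
  ⟨by simp, by simp, by simpa using hv, by simp⟩

lemma heightSet_nonempty (R : Dgraph) :
    {n | ∃ p, R.IsPath p ∧ p.length = n + 1}.Nonempty := by
  obtain ⟨v, hv⟩ := R.nonempty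
  exact ⟨0, [v], R.isPath_singleton hv, rfl⟩

lemma heightSet_bdd (R : Dgraph) :
    BddAbove {n | ∃ p, R.IsPath p ∧ p.length = n + 1} := by
  refine ⟨R.V.card, fun n hn => ?_⟩
  obtain ⟨p, hp, hlen⟩ := hn
  have h1 : p.toFinset.card = p.length := List.toFinset_card_of_nodup hp.2.1
  have h2 : p.toFinset ⊆ R.V := fun v hv => hp.2.2.1 v (List.mem_toFinset.mp hv)
  have h3 := Finset.card_le_card h2
  omega

lemma length_le_height (R : Dgraph) {p : List ℕ} (hp : R.IsPath p) :
    p.length ≤ R.height + 1 := by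
  have h0 : 0 < p.length := List.length_pos_iff.mpr hp.1
  have h1 : p.length - 1 ∈ {n | ∃ q, R.IsPath q ∧ q.length = n + 1} :=
    ⟨p, hp, by omega⟩
  have h2 : p.length - 1 ≤ R.height := le_csSup R.heightSet_bdd h1
  omega

lemma exists_max_path (R : Dgraph) :
    ∃ p, R.IsPath p ∧ p.length = R.height + 1 :=
  Nat.sSup_mem R.heightSet_nonempty R.heightSet_bdd

/-- Sum of consecutive interval sizes along a list. -/
def wsum (R : Dgraph) : List ℕ → ℕ
  | a :: b :: t => R.iota a b + R.wsum (b :: t)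
  | _ => 0

@[simp] lemma wsum_nil (R : Dgraph) : R.wsum [] = 0 := by simp [wsum]

@[simp] lemma wsum_single (R : Dgraph) (a : ℕ) : R.wsum [a] = 0 := by simp [wsum]

@[simp] lemma wsum_cons_cons (R : Dgraph) (a b : ℕ) (t : List ℕ) :
    R.wsum (a :: b :: t) = R.iota a b + R.wsum (b :: t) := by simp [wsum]

lemma wsum_eq_range (R : Dgraph) : ∀ p : List ℕ,
    R.wsum p = ∑ i ∈ Finset.range (p.length - 1), R.iota (p.getD i 0) (p.getD (i + 1) 0)
  | [] => by simp
  | [a] => by simp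
  | a :: b :: t => by
    have ih := R.wsum_eq_range (b :: t)
    have hlen : (a :: b :: t).length - 1 = ((b :: t).length - 1) + 1 := by simp
    rw [wsum_cons_cons, hlen, Finset.sum_range_succ']
    simp only [List.getD_cons_succ, List.getD_cons_zero] at ih ⊢
    rw [← ih]
    omega

lemma zip_tail_nodup : ∀ {p : List ℕ}, p.Nodup → (p.zip p.tail).Nodup
  | [], _ => by simp
  | [a], _ => by simp
  | a :: b :: t, h => by
    rw [List.nodup_cons] at h
    simp only [List.tail_cons, List.zip_cons_cons, List.nodup_cons]
    refine ⟨fun hmem => h.1 (List.of_mem_zip hmem).1, ?_⟩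
    have := zip_tail_nodup h.2
    simpa using this

lemma sum_map_zip (R : Dgraph) (f : ℕ → ℕ) : ∀ p : List ℕ,
    ((p.zip p.tail).map (fun q => R.iota (f q.1) (f q.2))).sum = R.wsum (p.map f)
  | [] => by simp
  | [a] => by simp
  | a :: b :: t => by
    have ih := R.sum_map_zip f (b :: t)
    simp only [List.tail_cons, List.zip_cons_cons, List.map_cons, List.sum_cons,
      wsum_cons_cons] at ih ⊢
    omega

lemma mem_zip_tail {p : List ℕ} {q : ℕ × ℕ} (h : q ∈ p.zip p.tail) :
    ∃ i, ∃ hi : i + 1 < p.length, q = (p[i], p[i + 1]) := by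
  obtain ⟨n, hn, he⟩ := List.mem_iff_getElem.mp h
  have hlen : (p.zip p.tail).length = p.length - 1 := by
    rw [List.length_zip, List.length_tail]
    exact min_eq_right (Nat.sub_le _ _)
  rw [hlen] at hn
  have hn' : n + 1 < p.length := by omega
  refine ⟨n, hn', ?_⟩
  rw [← he]
  simp [List.getElem_zip, List.getElem_tail]

lemma chain'_getElem {S : ℕ → ℕ → Prop} {p : List ℕ} (h : p.Chain' S)
    {i : ℕ} (hi : i + 1 < p.length) : S p[i] p[i + 1] := by
  rw [List.chain'_iff_get] at h
  have := h i (by omega)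
  simpa using this

lemma chain'_of_getElem {S : ℕ → ℕ → Prop} {p : List ℕ}
    (h : ∀ i (hi : i + 1 < p.length), S p[i] p[i + 1]) : p.Chain' S := by
  rw [List.chain'_iff_get]
  intro i hi
  simpa using h i (by omega)

end Dgraph
namespace Dgraph

lemma proper_nodup (R : Dgraph) (hTa : R.MemTa) :
    ∀ p : List ℕ, (∀ v ∈ p, v ∈ R.V) →
      p.Chain' (fun v w => (v, w) ∈ R.A ∧ v ≠ w) → p.Nodup
  | [], _, _ => by simp
  | a :: t, hmem, hch => by
    rw [List.nodup_cons]
    refine ⟨?_, R.proper_nodup hTa t (fun v hv => hmem v (List.mem_cons_of_mem a hv)) hch.tail⟩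
    intro ha
    obtain ⟨t₁, t₂, rfl⟩ := List.append_of_mem ha
    refine hTa ⟨(a :: t₁) ++ [a], ?_, ?_, ?_, ?_⟩
    · intro v hv
      apply hmem
      simp only [List.cons_append, List.mem_cons, List.mem_append, List.mem_singleton] at hv ⊢
      tauto
    · refine hch.prefix ⟨t₂, ?_⟩
      simp
    · simp
    · rw [List.getLast?_concat]
      simp

lemma iota_loop (R : Dgraph) (hTa : R.MemTa) {v : ℕ} (hv : v ∈ R.V)
    (hvv : (v, v) ∈ R.A) : R.iota v v = 1 := by
  have hset : R.interval v v = {v} := by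
    ext z
    simp only [interval, Finset.mem_filter, Finset.mem_singleton]
    constructor
    · rintro ⟨hz, h1, h2⟩
      by_contra hne
      refine hTa ⟨[v, z, v], ?_, ?_, ?_, ?_⟩
      · intro x hx
        simp only [List.mem_cons, List.not_mem_nil, or_false] at hx
        rcases hx with rfl | rfl | rfl
        · exact hv
        · exact hz
        · exact hv
      · refine List.chain'_cons.mpr ⟨⟨h1, fun h => hne h.symm⟩, ?_⟩
        exact List.chain'_cons.mpr ⟨⟨h2, hne⟩, by simp⟩
      · simp
      · simp
    · rintro rfl
      exact ⟨hv, hvv, hvv⟩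
  rw [iota, hset, Finset.card_singleton]

lemma chain'_or_loop {S : ℕ → ℕ → Prop} : ∀ p : List ℕ, p.Chain' S →
    p.Chain' (fun a b => S a b ∧ a ≠ b) ∨ ∃ l₁ v l₂, p = l₁ ++ v :: v :: l₂
  | [], _ => Or.inl (by simp)
  | [a], _ => Or.inl (by simp)
  | a :: b :: t, h => by
    rw [List.chain'_cons] at h
    rcases chain'_or_loop (b :: t) h.2 with hc | ⟨l₁, v, l₂, he⟩
    · by_cases hab : a = b
      · exact Or.inr ⟨[], a, t, by rw [hab]; rfl⟩
      · exact Or.inl (List.chain'_cons.mpr ⟨⟨h.1, hab⟩, hc⟩)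
    · exact Or.inr ⟨a :: l₁, v, l₂, by rw [he]; rfl⟩

lemma wsum_append (R : Dgraph) : ∀ (l₁ : List ℕ) (a : ℕ) (l₂ : List ℕ),
    R.wsum (l₁ ++ a :: l₂) = R.wsum (l₁ ++ [a]) + R.wsum (a :: l₂)
  | [], a, l₂ => by simp
  | [x], a, l₂ => by simp
  | x :: y :: l₁, a, l₂ => by
    have ih := R.wsum_append (y :: l₁) a l₂
    simp only [List.cons_append] at ih ⊢
    rw [wsum_cons_cons, wsum_cons_cons, ih]
    omega

lemma walk_bound (R : Dgraph) (hTa : R.MemTa)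
    (H : ∀ p, R.IsPath p → R.wsum p ≤ R.height + (p.length - 1)) :
    ∀ (n : ℕ) (p : List ℕ), p.length ≤ n → p ≠ [] → (∀ v ∈ p, v ∈ R.V) →
      p.Chain' (fun v w => (v, w) ∈ R.A) →
      R.wsum p ≤ R.height + (p.length - 1) := by
  intro n
  induction n with
  | zero =>
    intro p hlen hne _ _
    exact absurd (List.length_eq_zero_iff.mp (by omega)) hne
  | succ n ih =>
    intro p hlen hne hmem hch
    rcases chain'_or_loop p hch with hproper | ⟨m₁, v, m₂, rfl⟩
    · exact H p ⟨hne, R.proper_nodup hTa p hmem hproper, hmem, hch⟩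
    · have hsp := List.chain'_append.mp hch
      have hvv : (v, v) ∈ R.A := (List.chain'_cons.mp hsp.2.1).1
      have hv : v ∈ R.V := hmem v (by simp)
      have hch' : (m₁ ++ v :: m₂).Chain' (fun v w => (v, w) ∈ R.A) := by
        rw [List.chain'_append]
        refine ⟨hsp.1, (List.chain'_cons.mp hsp.2.1).2, ?_⟩
        intro x hx y hy
        exact hsp.2.2 x hx y (by simpa using hy)
      have hmem' : ∀ x ∈ m₁ ++ v :: m₂, x ∈ R.V := by
        intro x hx
        apply hmem
        simp only [List.mem_append, List.mem_cons] at hx ⊢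
        tauto
      have hrec := ih (m₁ ++ v :: m₂) (by simp at hlen ⊢; omega) (by simp) hmem' hch'
      have key : R.wsum (m₁ ++ v :: v :: m₂) = R.wsum (m₁ ++ v :: m₂) + 1 := by
        rw [R.wsum_append m₁ v (v :: m₂), R.wsum_append m₁ v m₂, wsum_cons_cons,
          R.iota_loop hTa hv hvv]
        omega
      rw [key]
      simp only [List.length_append, List.length_cons] at hrec ⊢
      omega

end Dgraph
namespace Dgraph

lemma iota_pair (R : Dgraph) (hTa : R.MemTa) (hRefl : R.IsRefl)
    {l₁ l₂ : List ℕ} {a b : ℕ} (hP : R.IsPath (l₁ ++ a :: b :: l₂))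
    (hlen : (l₁ ++ a :: b :: l₂).length = R.height + 1) :
    R.iota a b = 2 := by
  obtain ⟨hne, hnd, hmem, hch⟩ := hP
  have hchp : (l₁ ++ a :: b :: l₂).Chain' (fun v w => (v, w) ∈ R.A ∧ v ≠ w) := by
    have h1 : (l₁ ++ a :: b :: l₂).Chain' (fun v w => v ≠ w) := List.Pairwise.chain' hnd
    rw [List.chain'_iff_get] at h1 hch ⊢
    exact fun i hi => ⟨hch i hi, h1 i hi⟩
  have hsplit := List.chain'_append.mp hchp
  have hcons := List.chain'_cons.mp hsplit.2.1
  have hab_arc : (a, b) ∈ R.A := hcons.1.1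
  have hab : a ≠ b := hcons.1.2
  have ha : a ∈ R.V := hmem a (by simp)
  have hb : b ∈ R.V := hmem b (by simp)
  have hset : R.interval a b = {a, b} := by
    ext z
    simp only [interval, Finset.mem_filter, Finset.mem_insert, Finset.mem_singleton]
    constructor
    · rintro ⟨hz, h1, h2⟩
      by_contra hcon
      push_neg at hcon
      obtain ⟨hza, hzb⟩ := hcon
      by_cases hzP : z ∈ l₁ ++ a :: b :: l₂
      · simp only [List.mem_append, List.mem_cons] at hzP
        rcases hzP with hz1 | hz2 | hz3 | hz4
        · -- z occurs before a : closed walk z … a z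
          obtain ⟨m₁, m₂, rfl⟩ := List.append_of_mem hz1
          refine hTa ⟨((z :: m₂) ++ [a]) ++ [z], ?_, ?_, ?_, ?_⟩
          · intro v hv
            have hv' : v = z ∨ v ∈ m₁ ++ z :: m₂ ++ a :: b :: l₂ := by
              simp only [List.cons_append, List.mem_cons, List.mem_append,
                List.mem_singleton, List.not_mem_nil, or_false] at hv ⊢
              tauto
            rcases hv' with rfl | h
            · exact hz
            · exact hmem v h
          · rw [List.chain'_append]
            refine ⟨hchp.infix ⟨m₁, b :: l₂, by simp⟩, by simp, ?_⟩
            intro x hx y hy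
            rw [List.getLast?_concat] at hx
            simp only [Option.mem_def, Option.some.injEq, List.head?_cons] at hx hy
            subst hx; subst hy
            exact ⟨h1, fun h => hza h.symm⟩
          · simp
          · rw [List.getLast?_concat]
            simp
        · exact hza hz2
        · exact hzb hz3
        · -- z occurs after b : closed walk z b … z
          obtain ⟨m₁, m₂, rfl⟩ := List.append_of_mem hz4
          refine hTa ⟨z :: ((b :: m₁) ++ [z]), ?_, ?_, ?_, ?_⟩
          · intro v hv
            have hv' : v = z ∨ v ∈ l₁ ++ a :: b :: (m₁ ++ z :: m₂) := by
              simp only [List.cons_append, List.mem_cons, List.mem_append,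
                List.mem_singleton, List.not_mem_nil, or_false] at hv ⊢
              tauto
            rcases hv' with rfl | h
            · exact hz
            · exact hmem v h
          · have hinf : ((b :: m₁) ++ [z]).Chain' (fun v w => (v, w) ∈ R.A ∧ v ≠ w) :=
              hchp.infix ⟨l₁ ++ [a], m₂, by simp⟩
            rw [show z :: ((b :: m₁) ++ [z]) = z :: b :: (m₁ ++ [z]) from by simp,
              List.chain'_cons]
            refine ⟨⟨h2, hzb⟩, ?_⟩
            simpa using hinf
          · simp
          · rw [show z :: ((b :: m₁) ++ [z]) = (z :: b :: m₁) ++ [z] from by simp,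
              List.getLast?_concat]
            simp
      · -- z nowhere on the path : insert it, contradicting maximal height
        have hP' : R.IsPath (l₁ ++ a :: z :: b :: l₂) := by
          refine ⟨by simp, ?_, ?_, ?_⟩
          · have hperm : (l₁ ++ a :: z :: b :: l₂).Perm (z :: (l₁ ++ a :: b :: l₂)) := by
              have := List.perm_middle (a := z) (l₁ := l₁ ++ [a]) (l₂ := b :: l₂)
              simpa using this
            rw [hperm.nodup_iff, List.nodup_cons]
            exact ⟨hzP, hnd⟩
          · intro v hv
            simp only [List.mem_append, List.mem_cons] at hv
            rcases hv with h | h | rfl | h | h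
            · exact hmem v (by simp [h])
            · exact hmem v (by simp [h])
            · exact hz
            · exact hmem v (by simp [h])
            · exact hmem v (by simp [h])
          · have hsp := List.chain'_append.mp hch
            rw [List.chain'_append]
            refine ⟨hsp.1, ?_, ?_⟩
            · rw [List.chain'_cons, List.chain'_cons]
              exact ⟨h1, h2, (List.chain'_cons.mp hsp.2.1).2⟩
            · intro x hx y hy
              exact hsp.2.2 x hx y (by simpa using hy)
        have hle := R.length_le_height hP'
        simp only [List.length_append, List.length_cons] at hle hlen
        omega
    · rintro (rfl | rfl)
      · exact ⟨ha, hRefl _ ha, hab_arc⟩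
      · exact ⟨hb, hab_arc, hRefl _ hb⟩
  rw [iota, hset, Finset.card_insert_of_notMem (by simpa using hab),
    Finset.card_singleton]

lemma wsum_of_max_path_aux (R : Dgraph) (hTa : R.MemTa) (hRefl : R.IsRefl) :
    ∀ (p l₁ : List ℕ), R.IsPath (l₁ ++ p) → (l₁ ++ p).length = R.height + 1 →
      R.wsum p = 2 * (p.length - 1)
  | [], _, _, _ => by simp
  | [a], _, _, _ => by simp
  | a :: b :: t, l₁, hP, hlen => by
    have h2 : R.wsum (b :: t) = 2 * ((b :: t).length - 1) := by
      refine R.wsum_of_max_path_aux hTa hRefl (b :: t) (l₁ ++ [a]) ?_ ?_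
      · simpa using hP
      · simpa using hlen
    have h1 : R.iota a b = 2 := R.iota_pair hTa hRefl hP hlen
    rw [wsum_cons_cons, h1, h2]
    simp only [List.length_cons]
    omega

lemma wsum_of_max_path (R : Dgraph) (hTa : R.MemTa) (hRefl : R.IsRefl)
    {p : List ℕ} (hP : R.IsPath p) (hlen : p.length = R.height + 1) :
    R.wsum p = 2 * R.height := by
  have h := R.wsum_of_max_path_aux hTa hRefl p [] (by simpa) (by simpa)
  rw [h, hlen]
  simp

end Dgraph
namespace Dgraph

lemma pathGraph_V {P : List ℕ} (hne : P ≠ []) : (pathGraph P hne).V = P.toFinset := rfl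

lemma pathGraph_A {P : List ℕ} (hne : P ≠ []) :
    (pathGraph P hne).A = (P.zip P.tail).toFinset := rfl

lemma astar_pathGraph {P : List ℕ} (hne : P ≠ []) (hnd : P.Nodup) :
    (pathGraph P hne).Astar = (P.zip P.tail).toFinset := by
  rw [Astar, pathGraph_A]
  apply Finset.filter_true_of_mem
  intro q hq
  rw [List.mem_toFinset] at hq
  obtain ⟨i, hi, rfl⟩ := mem_zip_tail hq
  simp only
  intro h
  have := (hnd.getElem_inj_iff).mp h
  omega

lemma mu_pathGraph (R : Dgraph) {P : List ℕ} (hne : P ≠ []) (hnd : P.Nodup) (f : ℕ → ℕ) :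
    mu (pathGraph P hne) R f = R.wsum (P.map f) := by
  rw [mu, astar_pathGraph hne hnd, List.sum_toFinset _ (zip_tail_nodup hnd)]
  exact R.sum_map_zip f P

lemma hom_pathGraph_walk (R : Dgraph) {P : List ℕ} (hne : P ≠ []) {g : ℕ → ℕ}
    (hg : g ∈ Hom (pathGraph P hne) R) :
    (∀ v ∈ P.map g, v ∈ R.V) ∧ (P.map g).Chain' (fun v w => (v, w) ∈ R.A) := by
  obtain ⟨hgV, hgA, -⟩ := hg
  constructor
  · intro v hv
    obtain ⟨x, hx, rfl⟩ := List.mem_map.mp hv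
    exact hgV x (List.mem_toFinset.mpr hx)
  · apply chain'_of_getElem
    intro i hi
    simp only [List.length_map] at hi
    have harc : (P[i], P[i + 1]) ∈ (pathGraph P hne).A := by
      rw [pathGraph_A, List.mem_toFinset, List.mem_iff_getElem]
      refine ⟨i, ?_, ?_⟩
      · rw [List.length_zip, List.length_tail]
        exact lt_min (by omega) (by omega)
      · simp [List.getElem_zip, List.getElem_tail]
    have := hgA _ harc
    simpa using this

lemma chain'_replicate_of {S : ℕ → ℕ → Prop} {v : ℕ} (h : S v v) :
    ∀ k, (List.replicate k v).Chain' S := by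
  intro k
  induction k with
  | zero => simp
  | succ n ih =>
    rw [List.replicate_succ]
    cases n with
    | zero => simp
    | succ m =>
      rw [List.replicate_succ]
      exact List.chain'_cons.mpr ⟨h, by rwa [← List.replicate_succ]⟩

lemma wsum_replicate (R : Dgraph) (v : ℕ) (rest : List ℕ) :
    ∀ k, R.wsum (List.replicate k v ++ (v :: rest)) = k * R.iota v v + R.wsum (v :: rest)
  | 0 => by simp
  | (k + 1) => by
    have hcons : ∃ z, List.replicate k v ++ (v :: rest) = v :: z := by
      cases k with
      | zero => exact ⟨rest, by simp⟩
      | succ m => exact ⟨List.replicate m v ++ (v :: rest), by simp [List.replicate_succ]⟩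
    obtain ⟨z, hz⟩ := hcons
    rw [List.replicate_succ, List.cons_append, hz, wsum_cons_cons, ← hz,
      R.wsum_replicate v rest k]
    ring

lemma getElem_eq_of_eq {l l' : List ℕ} (h : l = l') {i : ℕ} (hi : i < l.length) :
    l[i] = l'[i]'(h ▸ hi) := by subst h; rfl

lemma poset_chain_last (R : Dgraph) (hpo : R.IsPoset) :
    ∀ (l : List ℕ) (x : ℕ), ((x :: l).Chain' (fun v w => (v, w) ∈ R.A ∧ v ≠ w)) →
      (∀ v ∈ x :: l, v ∈ R.V) → (x, (x :: l).getLast (by simp)) ∈ R.A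
  | [], x, _, hmem => by simpa using hpo.1 x (hmem x (by simp))
  | y :: l, x, hch, hmem => by
    have h1 := (List.chain'_cons.mp hch).1.1
    have h2 := R.poset_chain_last hpo l y (List.chain'_cons.mp hch).2
      (fun v hv => hmem v (by simp [List.mem_cons] at hv ⊢; tauto))
    have h3 := hpo.2.2 x y _ h1 h2
    simpa [List.getLast_cons] using h3

end Dgraph
namespace Dgraph

lemma memR_of_bound (R : Dgraph) (hRefl : R.IsRefl) (hTa : R.MemTa)
    (H : ∀ p, R.IsPath p → R.wsum p ≤ R.height + (p.length - 1)) : R.MemR := by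
  refine ⟨hTa, hRefl, ?_⟩
  set ξ : ℕ → ℕ := fun v => if v ∈ R.V then v else 0 with hξdef
  have hξHom : ξ ∈ Hom R R := by
    refine ⟨fun v hv => by simp [hξdef, hv], ?_, fun v hv => by simp [hξdef, hv]⟩
    intro p hp
    have h := R.A_sub p hp
    simp only [hξdef, if_pos h.1, if_pos h.2]
    simpa using hp
  have hξS : ξ ∈ SHom R R := by
    refine ⟨hξHom, ?_⟩
    intro p hp
    have h := Finset.mem_filter.mp hp
    have hs := R.A_sub p h.1
    simp only [hξdef, if_pos hs.1, if_pos hs.2]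
    exact h.2
  refine ⟨ξ, ⟨hξHom, ?_⟩, hξS⟩
  intro L hL
  obtain ⟨P, hPne, hPpath, hPlen, rfl⟩ := hL
  have hnd := hPpath.2.1
  have hmemP := hPpath.2.2.1
  have hchP := hPpath.2.2.2
  set f := restrict (pathGraph P hPne).V ξ with hfdef
  have hfP : ∀ v ∈ P, f v = v := by
    intro v hv
    have hvV : v ∈ R.V := hmemP v hv
    simp only [hfdef, restrict, pathGraph_V, List.mem_toFinset.mpr hv, if_pos, hξdef]
    simp [hvV]
  have hfHom : f ∈ Hom (pathGraph P hPne) R := by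
    refine ⟨?_, ?_, ?_⟩
    · intro v hv
      rw [pathGraph_V, List.mem_toFinset] at hv
      rw [hfP v hv]
      exact hmemP v hv
    · intro q hq
      have h1 := (pathGraph P hPne).A_sub q hq
      have hq1 : q.1 ∈ P := List.mem_toFinset.mp h1.1
      have hq2 : q.2 ∈ P := List.mem_toFinset.mp h1.2
      rw [hfP _ hq1, hfP _ hq2]
      rw [pathGraph_A, List.mem_toFinset] at hq
      obtain ⟨i, hi, rfl⟩ := mem_zip_tail hq
      exact chain'_getElem hchP hi
    · intro v hv
      simp [hfdef, restrict, hv]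
  refine ⟨hfHom, ?_⟩
  intro g hg
  have hgw := R.hom_pathGraph_walk hPne hg
  have hgne : P.map g ≠ [] := by simp [hPne]
  have hbound := R.walk_bound hTa H (P.map g).length (P.map g) le_rfl hgne hgw.1 hgw.2
  rw [R.mu_pathGraph hPne hnd g, R.mu_pathGraph hPne hnd f]
  have hmapf : P.map f = P := by
    have h := List.map_congr_left hfP
    simpa using h
  rw [hmapf, R.wsum_of_max_path hTa hRefl hPpath hPlen]
  simp only [List.length_map] at hbound
  omega

lemma bound_of_memR (R : Dgraph) (hR : R.MemR) :
    ∀ p, R.IsPath p → R.wsum p ≤ R.height + (p.length - 1) := by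
  obtain ⟨hTa, hRefl, ξ, hξML, hξS⟩ := hR
  obtain ⟨hξHom, hML⟩ := hξML
  intro p hp
  obtain ⟨P₀, Ps, rfl⟩ := List.exists_cons_of_ne_nil hp.1
  obtain ⟨Q, hQ, hQlen⟩ := R.exists_max_path
  have hQne : Q ≠ [] := hQ.1
  have hL : pathGraph Q hQne ∈ LSet R := ⟨Q, hQne, hQ, hQlen, rfl⟩
  obtain ⟨hfHom, hfmax⟩ := hML _ hL
  set f := restrict (pathGraph Q hQne).V ξ with hfdef
  have hple : (P₀ :: Ps).length ≤ R.height + 1 := R.length_le_height hp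
  simp only [List.length_cons] at hple
  obtain ⟨k, hkdef⟩ : ∃ k, R.height = Ps.length + k := ⟨R.height - Ps.length, by omega⟩
  set T := List.replicate k P₀ ++ (P₀ :: Ps) with hTdef
  have hTlen : T.length = R.height + 1 := by
    simp only [hTdef, List.length_append, List.length_replicate, List.length_cons]
    omega
  have hP₀V : P₀ ∈ R.V := hp.2.2.1 P₀ (by simp)
  have hP₀A : (P₀, P₀) ∈ R.A := hRefl P₀ hP₀V
  have hTmem : ∀ x ∈ T, x ∈ R.V := by
    intro x hx
    simp only [hTdef, List.mem_append, List.mem_replicate] at hx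
    rcases hx with ⟨-, rfl⟩ | hx
    · exact hP₀V
    · exact hp.2.2.1 x hx
  have hTchain : T.Chain' (fun v w => (v, w) ∈ R.A) := by
    rw [hTdef, List.chain'_append]
    refine ⟨chain'_replicate_of hP₀A k, hp.2.2.2, ?_⟩
    intro x hx y hy
    cases k with
    | zero => simp at hx
    | succ m =>
      rw [List.replicate_succ', List.getLast?_concat] at hx
      simp only [Option.mem_def, Option.some.injEq, List.head?_cons] at hx hy
      subst hx; subst hy
      exact hP₀A
  set g : ℕ → ℕ := fun x => if x ∈ Q.toFinset then T.getD (Q.idxOf x) 0 else 0 with hgdef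
  have hmapg : Q.map g = T := by
    apply List.ext_getElem
    · simp [hQlen, hTlen]
    · intro i h1 h2
      simp only [List.length_map] at h1
      rw [List.getElem_map]
      have hmem : Q[i] ∈ Q.toFinset := List.mem_toFinset.mpr (List.getElem_mem h1)
      simp only [hgdef, if_pos hmem]
      rw [hQ.2.1.idxOf_getElem i, List.getD_eq_getElem T 0 h2]
  have hgHom : g ∈ Hom (pathGraph Q hQne) R := by
    refine ⟨?_, ?_, ?_⟩
    · intro v hv
      rw [pathGraph_V] at hv
      have hv' : v ∈ Q := List.mem_toFinset.mp hv
      exact hTmem _ (hmapg ▸ List.mem_map_of_mem (f := g) hv')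
    · intro q hq
      rw [pathGraph_A, List.mem_toFinset] at hq
      obtain ⟨i, hi, rfl⟩ := mem_zip_tail hq
      have hQi : i < Q.length := by omega
      have hmQ : (Q.map g).length = Q.length := by simp
      have e1 : g Q[i] = T[i]'(by omega) := by
        have h := getElem_eq_of_eq hmapg (i := i) (by simpa using hQi)
        simpa using h
      have e2 : g Q[i + 1] = T[i + 1]'(by omega) := by
        have h := getElem_eq_of_eq hmapg (i := i + 1) (by simpa using hi)
        simpa using h
      simp only
      rw [e1, e2]
      exact chain'_getElem hTchain (by omega)
    · intro v hv
      rw [pathGraph_V] at hv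
      simp only [hgdef]
      exact if_neg hv
  have hmug := hfmax g hgHom
  rw [R.mu_pathGraph hQne hQ.2.1 g, R.mu_pathGraph hQne hQ.2.1 f, hmapg] at hmug
  have hmapf : Q.map f = Q.map ξ := by
    apply List.map_congr_left
    intro x hx
    simp only [hfdef, restrict, pathGraph_V, List.mem_toFinset.mpr hx, if_pos]
  have hmemξ : ∀ v ∈ Q.map ξ, v ∈ R.V := by
    intro v hv
    obtain ⟨x, hx, rfl⟩ := List.mem_map.mp hv
    exact hξHom.1 x (hQ.2.2.1 x hx)
  have hchξ : (Q.map ξ).Chain' (fun v w => (v, w) ∈ R.A ∧ v ≠ w) := by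
    apply chain'_of_getElem
    intro i hi
    simp only [List.length_map] at hi
    have harc : (Q[i], Q[i + 1]) ∈ R.A := chain'_getElem hQ.2.2.2 hi
    have hne' : Q[i] ≠ Q[i + 1] := by
      intro h
      have := (hQ.2.1.getElem_inj_iff).mp h
      omega
    have hstar : (Q[i], Q[i + 1]) ∈ R.Astar := Finset.mem_filter.mpr ⟨harc, hne'⟩
    have ha := hξHom.2.1 _ harc
    have hs := hξS.2 _ hstar
    simp only [List.getElem_map]
    exact ⟨ha, hs⟩
  have hpathξ : R.IsPath (Q.map ξ) :=
    ⟨by simp [hQne], R.proper_nodup hTa _ hmemξ hchξ, hmemξ,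
      hchξ.imp (fun a b h => h.1)⟩
  have hlenξ : (Q.map ξ).length = R.height + 1 := by simp [hQlen]
  have hwξ : R.wsum (Q.map ξ) = 2 * R.height := R.wsum_of_max_path hTa hRefl hpathξ hlenξ
  rw [hmapf, hwξ, hTdef, R.wsum_replicate P₀ Ps k, R.iota_loop hTa hP₀V hP₀A] at hmug
  simp only [List.length_cons]
  omega

end Dgraph
theorem stmt_8 :
    (∀ R : Dgraph, R.IsRefl → R.MemTa →
      (MemR R ↔ ∀ P : List ℕ, R.IsPath P →
        ∑ i ∈ Finset.range (P.length - 1),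
          R.iota (P.getD i 0) (P.getD (i + 1) 0) ≤ R.height + (P.length - 1))) ∧
    (∀ R : Dgraph, R.IsPoset → R.height ≤ 1 → MemR R) := by
  have main : ∀ R : Dgraph, R.IsRefl → R.MemTa →
      (MemR R ↔ ∀ P : List ℕ, R.IsPath P →
        ∑ i ∈ Finset.range (P.length - 1),
          R.iota (P.getD i 0) (P.getD (i + 1) 0) ≤ R.height + (P.length - 1)) := by
    intro R hRefl hTa
    constructor
    · intro h P hP
      rw [← R.wsum_eq_range P]
      exact R.bound_of_memR h P hP
    · intro h
      exact R.memR_of_bound hRefl hTa (fun p hp => by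
        rw [R.wsum_eq_range p]; exact h p hp)
  refine ⟨main, ?_⟩
  intro R hpo hh
  have hRefl := hpo.1
  have hTa : R.MemTa := by
    rintro ⟨p, hmem, hch, hlen, hclosed⟩
    obtain ⟨x, p', rfl⟩ := List.exists_cons_of_ne_nil
      (show p ≠ [] by intro h; subst h; simp at hlen)
    obtain ⟨y, t, rfl⟩ := List.exists_cons_of_ne_nil
      (show p' ≠ [] by intro h; subst h; simp at hlen)
    have hc := List.chain'_cons.mp hch
    have hxy : (x, y) ∈ R.A := hc.1.1
    have hxyne : x ≠ y := hc.1.2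
    have hlast : (y :: t).getLast (by simp) = x := by
      have h1 : (x :: y :: t).getLast? = some x := by rw [← hclosed]; simp
      rw [List.getLast?_cons_cons, List.getLast?_eq_getLast (l := y :: t) (by simp)] at h1
      simpa using h1
    have hyx : (y, x) ∈ R.A := by
      have h2 := R.poset_chain_last hpo t y hc.2
        (fun v hv => hmem v (by simp [List.mem_cons] at hv ⊢; tauto))
      rwa [hlast] at h2
    exact hxyne (hpo.2.1 x y hxy hyx)
  apply (main R hRefl hTa).mpr
  intro P hP
  rw [← R.wsum_eq_range P]
  obtain ⟨v, P', rfl⟩ := List.exists_cons_of_ne_nil hP.1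
  cases P' with
  | nil => simp
  | cons w P'' =>
    cases P'' with
    | cons x t =>
      exfalso
      have hle := R.length_le_height hP
      simp only [List.length_cons] at hle
      omega
    | nil =>
      have hvw : (v, w) ∈ R.A := by
        have h := hP.2.2.2
        rw [List.chain'_cons] at h
        exact h.1
      have hne : v ≠ w := by
        have h := hP.2.1
        rw [List.nodup_cons] at h
        intro he
        exact h.1 (by simp [he])
      have hh1 : 1 ≤ R.height :=
        le_csSup R.heightSet_bdd (⟨[v, w], hP, rfl⟩ :
          (1 : ℕ) ∈ {n | ∃ p, R.IsPath p ∧ p.length = n + 1})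
      have hiota : R.iota v w ≤ 2 := by
        have hsub : R.interval v w ⊆ {v, w} := by
          intro z hz
          rw [interval, Finset.mem_filter] at hz
          obtain ⟨hzV, h1, h2⟩ := hz
          by_contra hcon
          simp only [Finset.mem_insert, Finset.mem_singleton, not_or] at hcon
          have hpath : R.IsPath [v, z, w] := by
            refine ⟨by simp, ?_, ?_, ?_⟩
            · simp only [List.nodup_cons, List.mem_cons, List.not_mem_nil,
                or_false, not_or, List.nodup_nil]
              exact ⟨⟨fun h => hcon.1 h.symm, hne⟩, hcon.2, by trivial⟩
            · intro u hu
              simp only [List.mem_cons, List.not_mem_nil, or_false] at hu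
              rcases hu with rfl | rfl | rfl
              · exact hP.2.2.1 u (by simp)
              · exact hzV
              · exact hP.2.2.1 u (by simp)
            · exact List.chain'_cons.mpr ⟨h1, List.chain'_cons.mpr ⟨h2, by simp⟩⟩
          have hle := R.length_le_height hpath
          simp only [List.length_cons] at hle
          omega
        calc R.iota v w ≤ ({v, w} : Finset ℕ).card := Finset.card_le_card hsub
        _ ≤ 2 := (Finset.card_insert_le v {w}).trans (by simp)
      rw [wsum_cons_cons, wsum_single]
      simp only [List.length_cons]
      omega
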